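/- Given a bounded continuous function f = (f_1,…,f_m) on the m-star, define for each i the reflection-extension f̃_i : ℝ → ℝ by f̃_i(x) = f_i(x) for x ≥ 0 and f̃_i(x) = (2/m) Σ_{j=1}^m f_j(-x) - f_i(-x) for x ≤ 0. Then for each i, j the function x ↦ f̃_i(x) - f̃_j(-x) is odd, and the function x ↦ Σ_{i=1}^m f̃_i(x) is even. -/

import Mathlib

theorem reflection_extension_parity (m : ℕ) (hm : 1 ≤ m)
    (f : Fin m → ℝ → ℝ) (hc : ∀ i j : Fin m, f i 0 = f j 0)
    (F : Fin m → ℝ → ℝ)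
    (hFpos : ∀ i : Fin m, ∀ x : ℝ, 0 ≤ x → F i x = f i x)
    (hFneg : ∀ i : Fin m, ∀ x : ℝ, x ≤ 0 →
      F i x = (2 / m) * (∑ j : Fin m, f j (-x)) - f i (-x)) :
    (∀ i j : Fin m, ∀ x : ℝ, F i (-x) - F j x = -(F i x - F j (-x))) ∧
      (∀ x : ℝ, ∑ i : Fin m, F i (-x) = ∑ i : Fin m, F i x) := by
  have hm0 : (m : ℝ) ≠ 0 := Nat.cast_ne_zero.mpr (by omega)
  have key1 : ∀ i j : Fin m, ∀ x : ℝ, 0 ≤ x →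
      F i (-x) - F j x = -(F i x - F j (-x)) := by
    intro i j x hx
    rw [hFpos i x hx, hFpos j x hx, hFneg i (-x) (by linarith), hFneg j (-x) (by linarith)]
    simp only [neg_neg]
    ring
  have key2 : ∀ x : ℝ, 0 ≤ x → ∑ i : Fin m, F i (-x) = ∑ i : Fin m, F i x := by
    intro x hx
    have h1 : ∀ i : Fin m, F i (-x) = (2 / m) * (∑ j : Fin m, f j x) - f i x := by
      intro i; rw [hFneg i (-x) (by linarith)]; simp
    rw [Finset.sum_congr rfl (fun i _ => h1 i),
      Finset.sum_congr rfl (fun i _ => hFpos i x hx)]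
    rw [Finset.sum_sub_distrib, Finset.sum_const, Finset.card_univ, Fintype.card_fin]
    field_simp
    ring_nf; rw [mul_inv_cancel_right₀ hm0]; ring
  constructor
  · intro i j x
    rcases le_total 0 x with hx | hx
    · exact key1 i j x hx
    · have := key1 j i (-x) (by linarith)
      rw [neg_neg] at this
      linarith
  · intro x
    rcases le_total 0 x with hx | hx
    · exact key2 x hx
    · have := key2 (-x) (by linarith)
      rw [neg_neg] at this
      exact this.symm
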